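/- Under the setup where A is the diffusion generator with stationary measure ξ satisfying the coercivity −⟨f, A f⟩_ξ ≥ (λ_min/2)‖∇f‖²_ξ, and P_t the associated semigroup with ‖P_t f‖_ξ ≤ ‖f‖_ξ, for any β, t > 0 and f ∈ L²(ξ): ⟨f, t^{-1}(I − e^{−βt}P_t) f⟩_ξ ≥ (β/t)∫_0^t e^{−2βs}‖P_s f‖²_ξ ds + (λ_min/(2t))∫_0^t e^{−2βs}‖∇P_s f‖²_ξ ds + (1/(2t))‖f − e^{−βt}P_t f‖²_ξ. -/

import Mathlib

open MeasureTheory intervalIntegral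

/-- coercivity of the discretized operator `t⁻¹(I − e^{−βt}P_t)`.
Here `H` abstracts `L²(ξ)`, `A` the diffusion generator, `P` its semigroup, and
`G g` the gradient norm `‖∇g‖_ξ`; the coercivity hypothesis is
`⟨g, (β−A)g⟩ ≥ β‖g‖² + (λ_min/2) G(g)²` and the integral identity is Dynkin's formula
`f − e^{−βt}P_t f = ∫_0^t e^{−βs}(β − A)P_s f ds`. Conclusion:
`⟨f, t⁻¹(I − e^{−βt}P_t)f⟩ ≥ (β/t)∫_0^t e^{−2βs}‖P_s f‖² + (λ_min/(2t))∫_0^t e^{−2βs}‖∇P_s f‖²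
 + (1/(2t))‖f − e^{−βt}P_t f‖²`. -/
theorem stmt12 {H : Type*} [NormedAddCommGroup H] [InnerProductSpace ℝ H] [CompleteSpace H]
    (β lmin t : ℝ) (hβ : 0 < β) (hl : 0 < lmin) (ht : 0 < t)
    (A : H →ₗ[ℝ] H) (P : ℝ → H →L[ℝ] H) (G : H → ℝ)
    (hG : ∀ g, 0 ≤ G g) (hGsmul : ∀ (c : ℝ) (g : H), G (c • g) = |c| * G g)
    (hnonexp : ∀ s : ℝ, 0 ≤ s → ∀ g : H, ‖P s g‖ ≤ ‖g‖)
    (hcoer : ∀ g : H, β * ‖g‖ ^ 2 + (lmin / 2) * (G g) ^ 2 ≤ (inner ℝ g (β • g - A g) : ℝ))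
    (f : H)
    (hid : ∀ u : ℝ, 0 ≤ u → u ≤ t →
      f - Real.exp (-β * u) • P u f
        = ∫ s in (0 : ℝ)..u, Real.exp (-β * s) • (β • P s f - A (P s f)))
    (hc1 : Continuous fun s : ℝ => P s f)
    (hc2 : Continuous fun s : ℝ => A (P s f))
    (hc3 : Continuous fun s : ℝ => G (P s f)) :
    (β / t) * (∫ s in (0 : ℝ)..t, Real.exp (-2 * β * s) * ‖P s f‖ ^ 2)
      + (lmin / (2 * t)) * (∫ s in (0 : ℝ)..t, Real.exp (-2 * β * s) * (G (P s f)) ^ 2)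
      + (1 / (2 * t)) * ‖f - Real.exp (-β * t) • P t f‖ ^ 2
    ≤ (inner ℝ f (t⁻¹ • (f - Real.exp (-β * t) • P t f)) : ℝ) := by
  have hec : Continuous fun s : ℝ => Real.exp (-β * s) :=
    Real.continuous_exp.comp (continuous_const.mul continuous_id)
  have hec2 : Continuous fun s : ℝ => Real.exp (-2 * β * s) :=
    Real.continuous_exp.comp (continuous_const.mul continuous_id)
  set u : ℝ → H := fun s => Real.exp (-β * s) • (β • P s f - A (P s f)) with hu_def
  have hu_cont : Continuous u :=
    (hec.smul ((hc1.const_smul β).sub hc2))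
  set V : ℝ → H := fun r => ∫ s in (0 : ℝ)..r, u s with hV_def
  have hVd : ∀ r, HasDerivAt V (u r) r := fun r =>
    intervalIntegral.integral_hasDerivAt_right (hu_cont.intervalIntegrable _ _)
      hu_cont.aestronglyMeasurable.stronglyMeasurableAtFilter hu_cont.continuousAt
  have hVc : Continuous V := continuous_iff_continuousAt.2 fun r => (hVd r).continuousAt
  -- FTC for (1/2)‖V‖²
  have hQd : ∀ r, HasDerivAt (fun r => (inner ℝ (V r) (V r) : ℝ)) (2 * inner ℝ (V r) (u r)) r := by
    intro r
    have := (hVd r).inner ℝ (hVd r)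
    refine this.congr_deriv ?_
    rw [real_inner_comm (u r) (V r)]; ring
  have hDc : Continuous fun r : ℝ => (inner ℝ (V r) (u r) : ℝ) := hVc.inner hu_cont
  have hFTC : ∫ s in (0 : ℝ)..t, (inner ℝ (V s) (u s) : ℝ)
      = (1 / 2) * ‖V t‖ ^ 2 := by
    have h2 : ∫ s in (0 : ℝ)..t, 2 * (inner ℝ (V s) (u s) : ℝ)
        = (inner ℝ (V t) (V t) : ℝ) - (inner ℝ (V 0) (V 0) : ℝ) :=
      intervalIntegral.integral_eq_sub_of_hasDerivAt (fun s _ => hQd s)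
        ((continuous_const.mul hDc).intervalIntegrable _ _)
    rw [intervalIntegral.integral_const_mul] at h2
    have hV0 : V 0 = 0 := intervalIntegral.integral_same
    rw [hV0, inner_zero_left, real_inner_self_eq_norm_sq] at h2
    nlinarith [h2]
  -- inner with f commutes with integral
  have hfin : (inner ℝ f (V t) : ℝ) = ∫ s in (0 : ℝ)..t, (inner ℝ f (u s) : ℝ) := by
    have := (innerSL ℝ f).intervalIntegral_comp_comm (μ := volume) (hu_cont.intervalIntegrable (0 : ℝ) t)
    simpa [innerSL_apply_apply] using this.symm
  -- split
  have hsplit : ∀ s, (inner ℝ f (u s) : ℝ) = inner ℝ (V s) (u s) + inner ℝ (f - V s) (u s) := by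
    intro s
    rw [inner_sub_left]; ring
  have hIadd : ∫ s in (0 : ℝ)..t, (inner ℝ f (u s) : ℝ)
      = (∫ s in (0 : ℝ)..t, (inner ℝ (V s) (u s) : ℝ))
        + ∫ s in (0 : ℝ)..t, (inner ℝ (f - V s) (u s) : ℝ) := by
    rw [← intervalIntegral.integral_add (hDc.intervalIntegrable _ _)
      ((show Continuous fun s => (inner ℝ (f - V s) (u s) : ℝ) from (continuous_const.sub hVc).inner hu_cont).intervalIntegrable _ _)]
    simp only [hsplit]
  -- lower bound on second piece
  set I1 := ∫ s in (0 : ℝ)..t, Real.exp (-2 * β * s) * ‖P s f‖ ^ 2 with hI1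
  set I2 := ∫ s in (0 : ℝ)..t, Real.exp (-2 * β * s) * (G (P s f)) ^ 2 with hI2
  have hφc : Continuous fun s : ℝ =>
      Real.exp (-2 * β * s) * (β * ‖P s f‖ ^ 2 + (lmin / 2) * (G (P s f)) ^ 2) :=
    hec2.mul
      ((continuous_const.mul ((hc1.norm).pow 2)).add (continuous_const.mul (hc3.pow 2)))
  have hmono : ∫ s in (0 : ℝ)..t,
        Real.exp (-2 * β * s) * (β * ‖P s f‖ ^ 2 + (lmin / 2) * (G (P s f)) ^ 2)
      ≤ ∫ s in (0 : ℝ)..t, (inner ℝ (f - V s) (u s) : ℝ) := by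
    apply intervalIntegral.integral_mono_on ht.le (hφc.intervalIntegrable _ _)
      ((show Continuous fun s => (inner ℝ (f - V s) (u s) : ℝ) from (continuous_const.sub hVc).inner hu_cont).intervalIntegrable _ _)
    intro s hs
    have hVs : f - V s = Real.exp (-β * s) • P s f := by
      have := hid s hs.1 hs.2
      simp only [hV_def, hu_def] at *
      rw [← this]; abel
    rw [hVs, hu_def]
    simp only [real_inner_smul_left, real_inner_smul_right]
    rw [← mul_assoc, ← Real.exp_add]
    have hexp : -β * s + -β * s = -2 * β * s := by ring
    rw [hexp]
    exact mul_le_mul_of_nonneg_left (hcoer (P s f)) (Real.exp_pos _).le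
  have hφint : ∫ s in (0 : ℝ)..t,
        Real.exp (-2 * β * s) * (β * ‖P s f‖ ^ 2 + (lmin / 2) * (G (P s f)) ^ 2)
      = β * I1 + (lmin / 2) * I2 := by
    rw [hI1, hI2, ← intervalIntegral.integral_const_mul, ← intervalIntegral.integral_const_mul,
      ← intervalIntegral.integral_add]
    · congr 1; ext s; ring
    · exact (continuous_const.mul (hec2.mul
        (hc1.norm.pow 2))).intervalIntegrable _ _
    · exact (continuous_const.mul (hec2.mul
        (hc3.pow 2))).intervalIntegrable _ _
  -- assemble
  have hFt : f - Real.exp (-β * t) • P t f = V t := hid t ht.le le_rfl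
  rw [hFt]
  have hkey : β * I1 + (lmin / 2) * I2 + (1 / 2) * ‖V t‖ ^ 2 ≤ (inner ℝ f (V t) : ℝ) := by
    rw [hfin, hIadd, hFTC]
    have := hφint ▸ hmono
    linarith
  rw [real_inner_smul_right]
  have ht' : (0 : ℝ) < t⁻¹ := inv_pos.2 ht
  calc β / t * I1 + lmin / (2 * t) * I2 + 1 / (2 * t) * ‖V t‖ ^ 2
      = t⁻¹ * (β * I1 + (lmin / 2) * I2 + (1 / 2) * ‖V t‖ ^ 2) := by
        field_simp
    _ ≤ t⁻¹ * (inner ℝ f (V t) : ℝ) := mul_le_mul_of_nonneg_left hkey ht'.le
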